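/- Let N be a positive integer, x ∈ F_N a word, and β ∈ ℤ/Nℤ. (i) If α ∈ (ℤ/Nℤ)^× is a unit, then the word αβx (α, then β, prepended to x) lies in Ā if and only if the word (β − α⁻¹)x lies in Ā. (ii) The word 0βx lies in Ā if and only if x lies in Ā. -/
import Mathlib


/-- The monoid homomorphism π sending a word α₁…α_l over ℤ/Nℤ to the matrix product
[[0,1],[−1,α₁]] ⋯ [[0,1],[−1,α_l]]. -/
def piWordN (N : ℕ) (w : List (ZMod N)) : Matrix (Fin 2) (Fin 2) (ZMod N) :=
  (w.map fun α => !![0, 1; -1, α]).prod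

/-- Ā : the words whose image under π has (2,2)-entry equal to 0. -/
def Abar (N : ℕ) : Set (List (ZMod N)) :=
  {w | piWordN N w 1 1 = 0}

lemma piWordN_cons (N : ℕ) (a : ZMod N) (w : List (ZMod N)) :
    piWordN N (a :: w) = !![0, 1; -1, a] * piWordN N w := by
  simp [piWordN]

lemma piWordN_cons_apply11 (N : ℕ) (a : ZMod N) (w : List (ZMod N)) :
    piWordN N (a :: w) 1 1 = -(piWordN N w 0 1) + a * piWordN N w 1 1 := by
  rw [piWordN_cons]
  simp [Matrix.mul_apply, Fin.sum_univ_two]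

lemma piWordN_cons_apply01 (N : ℕ) (a : ZMod N) (w : List (ZMod N)) :
    piWordN N (a :: w) 0 1 = piWordN N w 1 1 := by
  rw [piWordN_cons]
  simp [Matrix.mul_apply, Fin.sum_univ_two]

theorem stmt14 (N : ℕ) (hN : 0 < N) (x : List (ZMod N)) (β : ZMod N) :
    (∀ α : (ZMod N)ˣ,
      ((α : ZMod N) :: β :: x ∈ Abar N ↔ (β - ((α⁻¹ : (ZMod N)ˣ) : ZMod N)) :: x ∈ Abar N)) ∧
    ((0 : ZMod N) :: β :: x ∈ Abar N ↔ x ∈ Abar N) := by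
  have hinv : ∀ α : (ZMod N)ˣ, (α : ZMod N) * ((α⁻¹ : (ZMod N)ˣ) : ZMod N) = 1 := fun α => by
    exact_mod_cast α.mul_inv
  constructor
  · intro α
    simp only [Abar, Set.mem_setOf_eq, piWordN_cons_apply11, piWordN_cons_apply01]
    have key : -piWordN N x 1 1 + (α : ZMod N) * (-(piWordN N x 0 1) + β * piWordN N x 1 1)
        = (α : ZMod N) * (-(piWordN N x 0 1)
            + (β - ((α⁻¹ : (ZMod N)ˣ) : ZMod N)) * piWordN N x 1 1) := by
      have := hinv α
      ring_nf
      linear_combination (piWordN N x 1 1) * this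
    rw [key]
    constructor
    · intro h
      have := congrArg (fun t => ((α⁻¹ : (ZMod N)ˣ) : ZMod N) * t) h
      simp only [mul_zero] at this
      rw [← mul_assoc] at this
      rw [show ((α⁻¹ : (ZMod N)ˣ) : ZMod N) * (α : ZMod N) = 1 by exact_mod_cast α.inv_mul,
        one_mul] at this
      exact this
    · intro h; rw [h, mul_zero]
  · simp only [Abar, Set.mem_setOf_eq, piWordN_cons_apply11, piWordN_cons_apply01]
    constructor
    · intro h
      have : -piWordN N x 1 1 = 0 := by simpa using h
      linear_combination -this
    · intro h; simp [h]
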